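/- Let A be a d×d Hermitian complex matrix with positive part A₊, and let B be any d×d positive semidefinite matrix. Then ‖A₊ − B‖ ≤ ‖A − B‖. -/

import Mathlib

open Matrix
open scoped ComplexOrder

/-- Frobenius norm of a complex matrix. -/
noncomputable def frob {d : ℕ} (A : Matrix (Fin d) (Fin d) ℂ) : ℝ :=
  Real.sqrt ((Aᴴ * A).trace).re

/-- Positive part A₊ = Σ_{λⱼ>0} λⱼ vⱼvⱼ† of a Hermitian matrix. -/
noncomputable def hermPosPart {d : ℕ} {A : Matrix (Fin d) (Fin d) ℂ}
    (hA : A.IsHermitian) : Matrix (Fin d) (Fin d) ℂ :=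
  (hA.eigenvectorUnitary : Matrix (Fin d) (Fin d) ℂ) *
    Matrix.diagonal (fun j => ((max (hA.eigenvalues j) 0 : ℝ) : ℂ)) *
    (hA.eigenvectorUnitary : Matrix (Fin d) (Fin d) ℂ)ᴴ

/-- The squared Frobenius norm is the sum of squared moduli of the entries. -/
lemma frob_sq {d : ℕ} (M : Matrix (Fin d) (Fin d) ℂ) :
    ((Mᴴ * M).trace).re = ∑ i, ∑ j, Complex.normSq (M j i) := by
  simp only [Matrix.trace, Matrix.diag, Matrix.mul_apply, Matrix.conjTranspose_apply,
    Complex.re_sum]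
  congr 1; ext i; congr 1; ext j
  rw [Complex.normSq_apply]
  simp [Complex.mul_re]

/-- The Frobenius norm is invariant under unitary conjugation. -/
lemma frob_conj {d : ℕ} (U : Matrix.unitaryGroup (Fin d) ℂ) (M : Matrix (Fin d) (Fin d) ℂ) :
    frob ((U : Matrix (Fin d) (Fin d) ℂ)ᴴ * M * (U : Matrix (Fin d) (Fin d) ℂ)) = frob M := by
  have h1 : (U : Matrix (Fin d) (Fin d) ℂ) * (U : Matrix (Fin d) (Fin d) ℂ)ᴴ = 1 :=
    Matrix.mem_unitaryGroup_iff.mp U.2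
  unfold frob
  congr 2
  set V := (U : Matrix (Fin d) (Fin d) ℂ)
  have key : (Vᴴ * M * V)ᴴ * (Vᴴ * M * V) = Vᴴ * (Mᴴ * M) * V := by
    simp only [conjTranspose_mul, conjTranspose_conjTranspose, Matrix.mul_assoc]
    rw [← Matrix.mul_assoc V Vᴴ (M * V), h1, Matrix.one_mul]
  rw [key, Matrix.trace_mul_cycle, ← Matrix.mul_assoc, h1, Matrix.one_mul]

/-- for Hermitian A and positive semidefinite B,
‖A₊ − B‖ ≤ ‖A − B‖ in Frobenius norm. -/
theorem posPart_closer_to_psd {d : ℕ}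
    (A : Matrix (Fin d) (Fin d) ℂ) (hA : A.IsHermitian)
    (B : Matrix (Fin d) (Fin d) ℂ) (hB : B.PosSemidef) :
    frob (hermPosPart hA - B) ≤ frob (A - B) := by
  set V := (hA.eigenvectorUnitary : Matrix (Fin d) (Fin d) ℂ) with hV
  have h1 : V * Vᴴ = 1 := Matrix.mem_unitaryGroup_iff.mp hA.eigenvectorUnitary.2
  have h2 : Vᴴ * V = 1 := Matrix.mem_unitaryGroup_iff'.mp hA.eigenvectorUnitary.2
  set C := Vᴴ * B * V with hC
  set D : Matrix (Fin d) (Fin d) ℂ :=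
    Matrix.diagonal (fun j => ((hA.eigenvalues j : ℝ) : ℂ)) with hD
  set Dp : Matrix (Fin d) (Fin d) ℂ :=
    Matrix.diagonal (fun j => ((max (hA.eigenvalues j) 0 : ℝ) : ℂ)) with hDp
  -- conjugations
  have hVDV : ∀ E : Matrix (Fin d) (Fin d) ℂ, Vᴴ * (V * E * Vᴴ) * V = E := by
    intro E
    calc Vᴴ * (V * E * Vᴴ) * V = (Vᴴ * V) * E * (Vᴴ * V) := by noncomm_ring
      _ = E := by rw [h2, Matrix.one_mul, Matrix.mul_one]
  have hAeq : Vᴴ * (A - B) * V = D - C := by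
    rw [Matrix.mul_sub, Matrix.sub_mul]
    congr 1
    have := hA.spectral_theorem
    rw [show A = V * D * Vᴴ by
      exact this.trans rfl]
    exact hVDV D
  have hPeq : Vᴴ * (hermPosPart hA - B) * V = Dp - C := by
    rw [Matrix.mul_sub, Matrix.sub_mul]
    congr 1
    rw [show hermPosPart hA = V * Dp * Vᴴ from rfl]
    exact hVDV Dp
  rw [← frob_conj hA.eigenvectorUnitary (hermPosPart hA - B),
      ← frob_conj hA.eigenvectorUnitary (A - B)]
  rw [show ((hA.eigenvectorUnitary : Matrix (Fin d) (Fin d) ℂ)) = V from rfl] at *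
  rw [hAeq, hPeq]
  -- properties of C
  have hCpsd : C.PosSemidef := hB.conjTranspose_mul_mul_same V
  have hdiag : ∀ i, (C i i).im = 0 ∧ 0 ≤ (C i i).re := by
    intro i
    constructor
    · have := hCpsd.isHermitian.apply i i
      have him := congrArg Complex.im this
      simpa using him.symm ▸ (by simp [Complex.conj_im] at him ⊢; linarith [him] : (C i i).im = 0)
    · have h := hCpsd.re_dotProduct_nonneg (Pi.single i 1)
      simpa [dotProduct, Matrix.mulVec, Pi.single_apply, Finset.mul_sum] using h
  -- reduce to sums
  unfold frob
  apply Real.sqrt_le_sqrt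
  rw [frob_sq, frob_sq]
  apply Finset.sum_le_sum
  intro i _
  apply Finset.sum_le_sum
  intro j _
  by_cases hij : j = i
  · subst hij
    simp only [Matrix.sub_apply, hD, hDp, Matrix.diagonal_apply_eq]
    obtain ⟨him, hre⟩ := hdiag j
    set c := C j j
    set l := hA.eigenvalues j
    rw [Complex.normSq_apply, Complex.normSq_apply]
    simp only [Complex.sub_re, Complex.sub_im, Complex.ofReal_re, Complex.ofReal_im, him]
    rcases le_or_gt 0 l with h | h
    · rw [max_eq_left h]
    · rw [max_eq_right h.le]
      nlinarith
  · simp [Matrix.sub_apply, hD, hDp, Matrix.diagonal_apply_ne _ hij]
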